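/- Let M be a positive integer and r a real number with 1 - 1/M ≤ r < 1. For any nonnegative reals λ_1, ..., λ_M with λ_1 + ... + λ_M = 1, there exists a sequence x_1, x_2, ... taking values in {1,...,M} such that for each j, the sum over k of (1-r)·r^{k-1} over those indices k with x_k = j equals λ_j. -/

import Mathlib

open Finset Filter Topology

noncomputable def gpArgmax (M : ℕ) [NeZero M] (μ : Fin M → ℝ) : Fin M :=
  Classical.choose (Finite.exists_max μ)

lemma gpArgmax_spec (M : ℕ) [NeZero M] (μ : Fin M → ℝ) (j : Fin M) :
    μ j ≤ μ (gpArgmax M μ) :=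
  Classical.choose_spec (Finite.exists_max μ) j

noncomputable def gpMu (M : ℕ) [NeZero M] (r : ℝ) (lam : Fin M → ℝ) : ℕ → Fin M → ℝ
  | 0 => lam
  | (k+1) => fun j =>
      gpMu M r lam k j - if gpArgmax M (gpMu M r lam k) = j then (1 - r) * r ^ k else 0

lemma gpMu_sum (M : ℕ) [NeZero M] (r : ℝ) (lam : Fin M → ℝ) (hsum : ∑ j, lam j = 1)
    (k : ℕ) : ∑ j, gpMu M r lam k j = r ^ k := by
  induction k with
  | zero => simpa [gpMu] using hsum
  | succ k ih =>
    simp only [gpMu, Finset.sum_sub_distrib, ih, Finset.sum_ite_eq, Finset.mem_univ, if_true]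
    ring

lemma gpMu_nonneg (M : ℕ) [NeZero M] (r : ℝ) (hr0 : 0 ≤ r) (hr1 : 1 - r ≤ 1 / M)
    (lam : Fin M → ℝ) (hnn : ∀ j, 0 ≤ lam j) (hsum : ∑ j, lam j = 1) (k : ℕ) (j : Fin M) :
    0 ≤ gpMu M r lam k j := by
  have hM' : (0:ℝ) < M := by
    exact_mod_cast Nat.pos_of_ne_zero (NeZero.ne M)
  induction k generalizing j with
  | zero => exact hnn j
  | succ k ih =>
    simp only [gpMu]
    split_ifs with h
    · have hmax : r ^ k ≤ M * gpMu M r lam k j := by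
        rw [← gpMu_sum M r lam hsum k]
        calc ∑ i, gpMu M r lam k i ≤ ∑ _i : Fin M, gpMu M r lam k j := by
              apply Finset.sum_le_sum
              intro i _
              exact h ▸ gpArgmax_spec M _ i
          _ = M * gpMu M r lam k j := by
              simp [Finset.sum_const, nsmul_eq_mul]
      have h1 : r ^ k / M ≤ gpMu M r lam k j := (div_le_iff₀' hM').mpr hmax
      have h2 : (1 - r) * r ^ k ≤ (1 / M) * r ^ k :=
        mul_le_mul_of_nonneg_right hr1 (pow_nonneg hr0 k)
      have h3 : (1 / (M:ℝ)) * r ^ k = r ^ k / M := by ring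
      linarith
    · linarith [ih j]

lemma gpMu_partial (M : ℕ) [NeZero M] (r : ℝ) (lam : Fin M → ℝ) (n : ℕ) (j : Fin M) :
    ∑ k ∈ Finset.range n, (if gpArgmax M (gpMu M r lam k) = j then (1 - r) * r ^ k else 0)
      = lam j - gpMu M r lam n j := by
  induction n with
  | zero => simp [gpMu]
  | succ n ih =>
    rw [Finset.sum_range_succ, ih]
    simp only [gpMu]
    ring

/-- Geometric-partition lemma: if `1 - 1/M ≤ r < 1` and the `λ j` are nonnegative
summing to `1`, there is a sequence `x` with values in `Fin M` such that the geometric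
mass `∑ (1-r) r^(k-1)` carried on `{k : x k = j}` equals `λ j` for every `j`. -/
theorem geometric_partition (M : ℕ) (hM : 0 < M) (r : ℝ)
    (hr1 : 1 - 1 / M ≤ r) (hr2 : r < 1)
    (lam : Fin M → ℝ) (hnn : ∀ j, 0 ≤ lam j) (hsum : ∑ j, lam j = 1) :
    ∃ x : ℕ → Fin M, ∀ j : Fin M,
      (∑' k : ℕ, (if x k = j then (1 - r) * r ^ k else 0)) = lam j := by
  haveI : NeZero M := ⟨hM.ne'⟩
  have hM' : (0:ℝ) < M := by exact_mod_cast hM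
  have hMge : (1:ℝ) ≤ M := by exact_mod_cast hM
  have hinv : 1 / (M:ℝ) ≤ 1 := by
    rw [div_le_one hM']; exact hMge
  have hr0 : 0 ≤ r := by linarith
  have hr1' : 1 - r ≤ 1 / M := by linarith
  refine ⟨fun k => gpArgmax M (gpMu M r lam k), fun j => ?_⟩
  set f : ℕ → ℝ := fun k => if gpArgmax M (gpMu M r lam k) = j then (1 - r) * r ^ k else 0
    with hf
  have hfle : ∀ k, f k ≤ (1 - r) * r ^ k := by
    intro k
    simp only [hf]
    split_ifs
    · exact le_refl _
    · exact mul_nonneg (by linarith) (pow_nonneg hr0 k)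
  have hfnn : ∀ k, 0 ≤ f k := by
    intro k
    simp only [hf]
    split_ifs
    · exact mul_nonneg (by linarith) (pow_nonneg hr0 k)
    · exact le_refl _
  have hsummable : Summable f :=
    Summable.of_nonneg_of_le hfnn hfle
      ((summable_geometric_of_lt_one hr0 hr2).mul_left (1 - r))
  have hμ0 : Tendsto (fun n => gpMu M r lam n j) atTop (𝓝 0) := by
    apply squeeze_zero (fun n => gpMu_nonneg M r hr0 hr1' lam hnn hsum n j)
      (fun n => ?_) (tendsto_pow_atTop_nhds_zero_of_lt_one hr0 hr2)
    calc gpMu M r lam n j ≤ ∑ i, gpMu M r lam n i :=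
          Finset.single_le_sum
            (fun i _ => gpMu_nonneg M r hr0 hr1' lam hnn hsum n i) (Finset.mem_univ j)
      _ = r ^ n := gpMu_sum M r lam hsum n
  have htend : Tendsto (fun n => ∑ k ∈ Finset.range n, f k) atTop (𝓝 (lam j)) := by
    simp only [hf, gpMu_partial]
    have := tendsto_const_nhds (x := lam j) (f := atTop (α := ℕ)) |>.sub hμ0
    simpa using this
  exact (hsummable.hasSum_iff_tendsto_nat.mpr htend).tsum_eq
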